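/- Let (G,H,K) be a BX2P-folder. Then for every k ∈ K, k² ∈ O₂(G), where O₂(G) is the largest normal 2-subgroup of G. Moreover, in Ḡ = G/O₂(G), the image K̄ consists of 1 together with elements of order at most 2, and K̄ \ {1} is a union of Ḡ-conjugacy classes of involutions. -/

import Mathlib

open Subgroup Pointwise

universe u

section Helpers
variable {G : Type u} [Group G] [Finite G]

theorem BX.card_lt (H K : Subgroup G) (hle : H ≤ K) (x : G) (hx : x ∈ K) (hxn : x ∉ H) :
    Nat.card H < Nat.card K := by
  have : (H : Set G) ⊂ (K : Set G) := ⟨hle, fun hsub => hxn (hsub hx)⟩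
  have := Set.ncard_lt_ncard this (Set.toFinite _)
  rw [← Nat.card_coe_set_eq, ← Nat.card_coe_set_eq] at this; exact this

theorem BX.card_le (H K : Subgroup G) (hle : H ≤ K) : Nat.card H ≤ Nat.card K := by
  have : (H : Set G) ⊆ (K : Set G) := hle
  have := Set.ncard_le_ncard this (Set.toFinite _)
  rw [← Nat.card_coe_set_eq, ← Nat.card_coe_set_eq] at this; exact this

theorem BX.eq_of_card (H K : Subgroup G) (hle : H ≤ K) (hcard : Nat.card K ≤ Nat.card H) :
    H = K := by
  rcases lt_or_eq_of_le hle with h | h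
  · obtain ⟨x, hxK, hxH⟩ := SetLike.exists_of_lt h
    have := BX.card_lt H K hle x hxK hxH; omega
  · exact h

theorem BX.card_lt_of_ne_top (Q : Subgroup G) (hQ : Q ≠ ⊤) : Nat.card Q < Nat.card G := by
  obtain ⟨x, hxK, hxH⟩ := SetLike.exists_of_lt (show Q < (⊤ : Subgroup G) from lt_top_iff_ne_top.2 hQ)
  have h := BX.card_lt Q ⊤ le_top x hxK hxH
  rwa [Subgroup.card_top] at h

/-- transport of closures into a subgroup -/
theorem BX.subgroupOf_closure (P : Subgroup G) (S : Set G) (hS : S ⊆ (P : Set G)) :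
    closure (P.subtype ⁻¹' S) = (closure S).subgroupOf P := by
  have hSP : closure S ≤ P := (closure_le P).2 hS
  apply le_antisymm
  · rw [closure_le]
    intro x hx
    exact mem_subgroupOf.2 (subset_closure hx)
  · intro x hx
    have hxc : (x : G) ∈ closure S := mem_subgroupOf.1 hx
    have key : ∀ g, ∀ hgc : g ∈ closure S, ∀ hg : g ∈ P,
        (⟨g, hg⟩ : P) ∈ closure (P.subtype ⁻¹' S) := by
      intro g hgc
      induction hgc using closure_induction with
      | mem s hs => intro hg; exact subset_closure (by simpa using hs)
      | one => intro hg; exact one_mem _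
      | mul a b ha hb iha ihb =>
        intro hab
        have : (⟨a * b, hab⟩ : P) = ⟨a, hSP ha⟩ * ⟨b, hSP hb⟩ := rfl
        rw [this]; exact mul_mem (iha _) (ihb _)
      | inv a ha iha =>
        intro hai
        have : (⟨a⁻¹, hai⟩ : P) = (⟨a, hSP ha⟩ : P)⁻¹ := rfl
        rw [this]; exact inv_mem (iha _)
    have := key (x : G) hxc x.2
    simpa using this
end Helpers

/-- Key p-group lemma: in a finite p-group generated by a conjugation-invariant
set `E`, any proper `E`-generated subgroup is normalized by some element of `E`
outside of it. -/
theorem BX.pgroup_lemma : ∀ (n : ℕ) (Q : Type u) [Group Q] [Finite Q], Nat.card Q ≤ n →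
    ∀ (p : ℕ) [Fact p.Prime], IsPGroup p Q →
    ∀ (E : Set Q), (∀ g : Q, ∀ e ∈ E, g * e * g⁻¹ ∈ E) → closure E = ⊤ →
    ∀ (U : Subgroup Q), closure (E ∩ U) = U → U ≠ ⊤ →
    ∃ e ∈ E, e ∉ U ∧ ∀ u ∈ U, e * u * e⁻¹ ∈ U := by
  intro n
  induction n with
  | zero =>
    intro Q _ _ hcard
    exfalso
    have : 0 < Nat.card Q := Nat.card_pos
    omega
  | succ n ih =>
    intro Q _ _ hcard p _ hQ E hinv hgen U hU hUne
    have hNC : NormalizerCondition Q := by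
      haveI := hQ.isNilpotent
      exact normalizerCondition_of_isNilpotent
    obtain ⟨M, hM𝒮, hMmax⟩ := Set.Finite.exists_maximalFor (fun H : Subgroup Q => Nat.card H)
      {H : Subgroup Q | U ≤ H ∧ H ≠ ⊤} (Set.toFinite _) ⟨U, le_refl U, hUne⟩
    obtain ⟨hUM, hMne⟩ := hM𝒮
    have hMnormal : M.Normal := by
      rw [← normalizer_eq_top_iff]
      by_contra hne
      have hmem : normalizer (M : Set Q) ∈ {H : Subgroup Q | U ≤ H ∧ H ≠ ⊤} :=
        ⟨le_trans hUM le_normalizer, hne⟩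
      have hlt : M < normalizer (M : Set Q) := hNC M (lt_top_iff_ne_top.2 hMne)
      have hcardle : Nat.card M ≤ Nat.card (normalizer (M : Set Q)) := BX.card_le _ _ le_normalizer
      have heq := hMmax hmem hcardle
      exact absurd (BX.eq_of_card _ _ le_normalizer heq) (ne_of_lt hlt)
    have hUP₀ : U ≤ closure (E ∩ (M : Set Q)) := by
      conv_lhs => rw [← hU]
      exact closure_mono (Set.inter_subset_inter_right E hUM)
    by_cases hcase : closure (E ∩ (M : Set Q)) = U
    · -- an element of E outside M works
      have hEnotM : ¬ E ⊆ (M : Set Q) := by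
        intro hsub
        exact hMne (top_le_iff.1 (hgen ▸ (closure_le M).2 hsub))
      obtain ⟨e, heE, heM⟩ := Set.not_subset.1 hEnotM
      refine ⟨e, heE, fun hU' => heM (hUM hU'), ?_⟩
      intro u hu
      have hmap : U.map (MulAut.conj e).toMonoidHom ≤ U := by
        conv_lhs => rw [← hcase]
        rw [MonoidHom.map_closure]
        apply closure_le _ |>.2
        apply Set.Subset.trans (Set.image_mono (le_of_eq rfl : E ∩ (M : Set Q) ⊆ _))
        intro y hy
        obtain ⟨x, ⟨hxE, hxM⟩, hxy⟩ := hy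
        have : y = e * x * e⁻¹ := by simpa [MulAut.conj_apply] using hxy.symm
        rw [this]
        rw [← hcase]
        exact subset_closure ⟨hinv e x hxE, hMnormal.conj_mem x hxM e⟩
      exact hmap ⟨u, hu, by simp [MulAut.conj_apply]⟩
    · -- recurse into P₀
      have hP₀M : closure (E ∩ (M : Set Q)) ≤ M := (closure_le M).2 Set.inter_subset_right
      set P₀ : Subgroup Q := closure (E ∩ (M : Set Q)) with hP₀def
      have hcard' : Nat.card P₀ ≤ n := by
        have h1 : Nat.card P₀ ≤ Nat.card M := BX.card_le _ _ hP₀M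
        have h2 : Nat.card M < Nat.card Q := BX.card_lt_of_ne_top M hMne
        omega
      have hQ' : IsPGroup p P₀ := IsPGroup.to_subgroup hQ P₀
      set E' : Set P₀ := P₀.subtype ⁻¹' E with hE'def
      have hinv' : ∀ g : P₀, ∀ e ∈ E', g * e * g⁻¹ ∈ E' := by
        intro g e he
        simp only [hE'def, Set.mem_preimage, Subgroup.coe_subtype] at he ⊢
        push_cast
        exact hinv g e he
      have hgen' : closure E' = ⊤ := by
        rw [← top_le_iff, ← closure_preimage_eq_top (E ∩ (M : Set Q))]
        exact closure_mono (Set.preimage_mono Set.inter_subset_left)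
      set U' : Subgroup P₀ := U.subgroupOf P₀ with hU'def
      have hU' : closure (E' ∩ U') = U' := by
        have hEU : E ∩ (U : Set Q) ⊆ (P₀ : Set Q) :=
          Set.Subset.trans Set.inter_subset_right hUP₀
        have h2 := BX.subgroupOf_closure P₀ (E ∩ (U : Set Q)) hEU
        rw [hU] at h2
        have h3 : E' ∩ (U' : Set P₀) = P₀.subtype ⁻¹' (E ∩ (U : Set Q)) := by
          ext x
          simp [hE'def, hU'def, mem_subgroupOf]
        rw [h3, h2, hU'def]
      have hU'ne : U' ≠ ⊤ := by
        intro h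
        exact hcase (le_antisymm (subgroupOf_eq_top.1 h) hUP₀)
      obtain ⟨e', he'E, he'U, he'n⟩ := ih P₀ hcard' p hQ' E' hinv' hgen' U' hU' hU'ne
      refine ⟨(e' : Q), he'E, fun h => he'U (mem_subgroupOf.2 h), ?_⟩
      intro u hu
      have huP : u ∈ P₀ := hUP₀ hu
      have := he'n ⟨u, huP⟩ (mem_subgroupOf.2 hu)
      have h3 : ((e' * ⟨u, huP⟩ * e'⁻¹ : P₀) : Q) ∈ U := mem_subgroupOf.1 this
      simpa using h3

section BaerHelpers
variable {Γ : Type u} [Group Γ] [Finite Γ]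

theorem BX.isPGroup_of_le {p : ℕ} (H K : Subgroup Γ) (hle : H ≤ K) (hK : IsPGroup p K) :
    IsPGroup p H := by
  intro g
  obtain ⟨n, hn⟩ := hK ⟨(g : Γ), hle g.2⟩
  refine ⟨n, ?_⟩
  ext
  have := congrArg (Subtype.val) hn
  push_cast at this ⊢
  simpa using this

theorem BX.mem_normalizer_of_conj (U : Subgroup Γ) (e : Γ) (h : ∀ u ∈ U, e * u * e⁻¹ ∈ U) :
    e ∈ normalizer (U : Set Γ) := by
  have hmap : U.map (MulAut.conj e).toMonoidHom ≤ U := by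
    intro y hy
    obtain ⟨u, hu, huy⟩ := hy
    have : y = e * u * e⁻¹ := by simpa [MulAut.conj_apply] using huy.symm
    rw [this]; exact h u hu
  have hcard : Nat.card U ≤ Nat.card (U.map (MulAut.conj e).toMonoidHom) :=
    le_of_eq (Nat.card_congr (Subgroup.equivMapOfInjective U _ (MulAut.conj e).injective).toEquiv)
  have heq : U.map (MulAut.conj e).toMonoidHom = U := by
    exact BX.eq_of_card _ _ hmap hcard
  rw [Subgroup.mem_normalizer_iff]
  intro x
  constructor
  · intro hx
    rw [← heq]
    exact ⟨x, hx, by simp [MulAut.conj_apply]⟩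
  · intro hx
    rw [← heq] at hx
    obtain ⟨u, hu, huy⟩ := hx
    simp only [MulEquiv.coe_toMonoidHom, MulAut.conj_apply] at huy
    have : u = x := by
      have := huy
      group at this
      exact mul_left_cancel (mul_right_cancel this)
    rwa [← this]

/-- ambient form of the p-group lemma -/
theorem BX.pgroup_lemma_ambient (p : ℕ) [Fact p.Prime] (P U : Subgroup Γ)
    (hP : IsPGroup p P) (D : Set Γ)
    (hinv : ∀ g : Γ, ∀ e ∈ D, g * e * g⁻¹ ∈ D)
    (hPgen : closure (D ∩ (P : Set Γ)) = P)
    (hUle : U ≤ P)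
    (hUgen : closure (D ∩ (P : Set Γ) ∩ (U : Set Γ)) = U)
    (hUne : U ≠ P) :
    ∃ e, e ∈ D ∧ e ∈ P ∧ e ∉ U ∧ ∀ u ∈ U, e * u * e⁻¹ ∈ U := by
  set E : Set P := P.subtype ⁻¹' D with hEdef
  have hE2 : E = P.subtype ⁻¹' (D ∩ (P : Set Γ)) := by
    ext x; simp [hEdef]
  have hgen : closure E = ⊤ := by
    rw [hE2, BX.subgroupOf_closure P _ Set.inter_subset_right, hPgen, subgroupOf_self]
  have hinv' : ∀ g : P, ∀ e ∈ E, g * e * g⁻¹ ∈ E := by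
    intro g e he
    simp only [hEdef, Set.mem_preimage, Subgroup.coe_subtype] at he ⊢
    push_cast
    exact hinv g e he
  set U' : Subgroup P := U.subgroupOf P with hU'def
  have hU' : closure (E ∩ U') = U' := by
    have h3 : E ∩ (U' : Set P) = P.subtype ⁻¹' (D ∩ (P : Set Γ) ∩ (U : Set Γ)) := by
      ext x
      simp [hEdef, hU'def, mem_subgroupOf]
    rw [h3, BX.subgroupOf_closure P _ (Set.Subset.trans Set.inter_subset_left
      Set.inter_subset_right), hUgen, hU'def]
  have hU'ne : U' ≠ ⊤ := by
    intro h
    exact hUne (le_antisymm hUle (subgroupOf_eq_top.1 h))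
  obtain ⟨e', he'E, he'U, he'n⟩ := BX.pgroup_lemma (Nat.card P) P (le_refl _) p hP
    E hinv' hgen U' hU' hU'ne
  refine ⟨(e' : Γ), he'E, e'.2, fun h => he'U (mem_subgroupOf.2 h), ?_⟩
  intro u hu
  have huP : u ∈ P := hUle hu
  have := he'n ⟨u, huP⟩ (mem_subgroupOf.2 hu)
  have h3 : ((e' * ⟨u, huP⟩ * e'⁻¹ : P) : Γ) ∈ U := mem_subgroupOf.1 this
  simpa using h3

end BaerHelpers

/-- Baer's theorem (normal-set version): if `D` is a conjugation-invariant subset of a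
finite group all of whose pairs generate `p`-subgroups, then `D` generates a `p`-group. -/
theorem BX.baer : ∀ (n : ℕ) (Γ : Type u) [Group Γ] [Finite Γ], Nat.card Γ ≤ n →
    ∀ (p : ℕ) [Fact p.Prime] (D : Set Γ),
    (∀ g : Γ, ∀ d ∈ D, g * d * g⁻¹ ∈ D) →
    (∀ a ∈ D, ∀ b ∈ D, IsPGroup p (closure {a, b} : Subgroup Γ)) →
    IsPGroup p (closure D : Subgroup Γ) := by
  intro n
  induction n with
  | zero =>
    intro Γ _ _ hcard
    exfalso
    have : 0 < Nat.card Γ := Nat.card_pos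
    omega
  | succ n ih =>
    intro Γ _ _ hcard p hp D hinv hpair
    classical
    set B : Sylow p Γ → Subgroup Γ := fun T => closure (D ∩ ((T : Subgroup Γ) : Set Γ))
      with hBdef
    have hBle : ∀ T : Sylow p Γ, B T ≤ (T : Subgroup Γ) := fun T =>
      (closure_le _).2 Set.inter_subset_right
    have hBp : ∀ T : Sylow p Γ, IsPGroup p (B T) := fun T =>
      BX.isPGroup_of_le _ _ (hBle T) T.2
    have hBmem : ∀ T : Sylow p Γ, ∀ x ∈ D, x ∈ (T : Subgroup Γ) → x ∈ B T :=
      fun T x hx hxT => subset_closure ⟨hx, hxT⟩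
    have hpairT : ∀ a ∈ D, ∀ b ∈ D, ∃ T : Sylow p Γ, a ∈ B T ∧ b ∈ B T := by
      intro a ha b hb
      obtain ⟨T, hT⟩ := (hpair a ha b hb).exists_le_sylow
      exact ⟨T, hBmem T a ha (hT (subset_closure (by simp))),
        hBmem T b hb (hT (subset_closure (by simp)))⟩
    have hconjB : ∀ (g : Γ) (T : Sylow p Γ),
        B (g • T) = (B T).map (MulAut.conj g).toMonoidHom := by
      intro g T
      have hmemsmul : ∀ y : Γ, y ∈ ((g • T : Sylow p Γ) : Subgroup Γ) ↔
          ∃ z ∈ (T : Subgroup Γ), g * z * g⁻¹ = y := by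
        intro y
        rw [Sylow.coe_subgroup_smul, Subgroup.mem_smul_pointwise_iff_exists]
        constructor
        · rintro ⟨z, hz, hzy⟩
          exact ⟨z, hz, by simpa [MulAut.smul_def, MulAut.conj_apply] using hzy⟩
        · rintro ⟨z, hz, hzy⟩
          exact ⟨z, hz, by simpa [MulAut.smul_def, MulAut.conj_apply] using hzy⟩
      have h2 : D ∩ (((g • T : Sylow p Γ) : Subgroup Γ) : Set Γ)
          = ⇑(MulAut.conj g).toMonoidHom '' (D ∩ ((T : Subgroup Γ) : Set Γ)) := by
        ext y
        simp only [Set.mem_image, Set.mem_inter_iff, SetLike.mem_coe,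
          MulEquiv.coe_toMonoidHom, MulAut.conj_apply]
        constructor
        · rintro ⟨hyD, hyT⟩
          obtain ⟨z, hz, hzy⟩ := (hmemsmul y).1 hyT
          refine ⟨z, ⟨?_, hz⟩, hzy⟩
          have h5 := hinv g⁻¹ y hyD
          rw [← hzy] at h5
          simpa [mul_assoc] using h5
        · rintro ⟨z, ⟨hzD, hzT⟩, rfl⟩
          exact ⟨hinv g z hzD, (hmemsmul _).2 ⟨z, hzT, rfl⟩⟩
      show closure (D ∩ (((g • T : Sylow p Γ) : Subgroup Γ) : Set Γ)) = _
      rw [h2, ← MonoidHom.map_closure]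
    have hcomp : ∀ T T' : Sylow p Γ, B T ≤ B T' → B T = B T' := by
      intro T T' hle
      obtain ⟨g, hg⟩ := MulAction.exists_smul_eq Γ T T'
      have hc := hconjB g T
      rw [hg] at hc
      have hcard2 : Nat.card (B T') ≤ Nat.card (B T) := by
        rw [hc]
        exact le_of_eq (Nat.card_congr
          (Subgroup.equivMapOfInjective (B T) _ (MulAut.conj g).injective).toEquiv.symm)
      exact BX.eq_of_card _ _ hle hcard2
    by_cases hA : ∃ x ∈ D, x ≠ 1 ∧ ∀ T T' : Sylow p Γ, x ∈ B T → x ∈ B T' → B T = B T'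
    · -- quotient by the (p-group) normal closure of x and recurse
      obtain ⟨x, hxD, hx1, huniq⟩ := hA
      obtain ⟨T₀, hxT₀, -⟩ := hpairT x hxD x hxD
      set W : Subgroup Γ := normalClosure ({x} : Set Γ) with hWdef
      have hWle : W ≤ B T₀ := by
        rw [hWdef]
        show closure (Group.conjugatesOfSet ({x} : Set Γ)) ≤ B T₀
        apply (closure_le _).2
        intro y hy
        rw [Group.mem_conjugatesOfSet_iff] at hy
        obtain ⟨a, ha, hconj⟩ := hy
        rw [Set.mem_singleton_iff] at ha
        subst ha
        obtain ⟨c, hc⟩ := isConj_iff.1 hconj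
        have hyx : y = c * a * c⁻¹ := hc.symm
        have hyD : y ∈ D := hyx ▸ hinv c a hxD
        obtain ⟨T₁, hxT₁, hyT₁⟩ := hpairT a hxD y hyD
        rw [huniq T₁ T₀ hxT₁ hxT₀] at hyT₁
        exact hyT₁
      have hWp : IsPGroup p W := BX.isPGroup_of_le _ _ (le_trans hWle (hBle T₀)) T₀.2
      have hxW : x ∈ W := subset_normalClosure (Set.mem_singleton x)
      have hWcard : 1 < Nat.card W := by
        rw [Finite.one_lt_card_iff_nontrivial]
        exact ⟨⟨x, hxW⟩, 1, by simp [Subtype.ext_iff, hx1]⟩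
      have hqcard : Nat.card (Γ ⧸ W) ≤ n := by
        have h3 := Subgroup.card_eq_card_quotient_mul_card_subgroup W
        have h4 : 0 < Nat.card (Γ ⧸ W) := Nat.card_pos
        nlinarith
      set π := QuotientGroup.mk' W with hπdef
      set D' : Set (Γ ⧸ W) := π '' D with hD'def
      have hD'inv : ∀ g' : Γ ⧸ W, ∀ d' ∈ D', g' * d' * g'⁻¹ ∈ D' := by
        intro g' d' hd'
        obtain ⟨g, rfl⟩ := QuotientGroup.mk'_surjective W g'
        obtain ⟨d, hd, rfl⟩ := hd'
        refine ⟨g * d * g⁻¹, hinv g d hd, ?_⟩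
        simp [hπdef]
      have hD'pair : ∀ a' ∈ D', ∀ b' ∈ D',
          IsPGroup p (closure {a', b'} : Subgroup (Γ ⧸ W)) := by
        intro a' ha' b' hb'
        obtain ⟨a, ha, rfl⟩ := ha'
        obtain ⟨b, hb, rfl⟩ := hb'
        have : ({π a, π b} : Set (Γ ⧸ W)) = π '' {a, b} := by
          rw [Set.image_pair]
        rw [this, ← MonoidHom.map_closure]
        exact (hpair a ha b hb).map π
      have hIH := ih (Γ ⧸ W) hqcard p D' hD'inv hD'pair
      intro g
      have hgq : π (g : Γ) ∈ closure D' := by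
        rw [hD'def, ← MonoidHom.map_closure]
        exact mem_map_of_mem π g.2
      obtain ⟨m, hm⟩ := hIH ⟨π (g : Γ), hgq⟩
      have hm' : (π (g : Γ)) ^ p ^ m = 1 := by
        have := congrArg Subtype.val hm
        push_cast at this
        simpa using this
      have hmem : ((g : Γ)) ^ p ^ m ∈ W := by
        rw [← QuotientGroup.eq_one_iff]
        rw [← map_pow] at hm'
        exact hm'
      obtain ⟨l, hl⟩ := hWp ⟨_, hmem⟩
      refine ⟨m + l, ?_⟩
      have hl' : (((g : Γ)) ^ p ^ m) ^ p ^ l = 1 := by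
        have := congrArg Subtype.val hl
        push_cast at this
        simpa using this
      ext
      push_cast
      rw [pow_add, pow_mul]
      simpa using hl'
    · -- no such x : derive that D consists of 1 only, or contradiction
      by_cases htriv : D ⊆ {1}
      · have hb : closure D ≤ ⊥ := by
          rw [← Subgroup.closure_singleton_one]
          exact closure_mono htriv
        rw [le_bot_iff.1 hb]
        exact IsPGroup.of_bot
      · exfalso
        obtain ⟨x, hxD, hx1⟩ := Set.not_subset.1 htriv
        rw [Set.mem_singleton_iff] at hx1
        push_neg at hA
        obtain ⟨T₁', T₂', hx1', hx2', hBne'⟩ := hA x hxD hx1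
        set f : Sylow p Γ × Sylow p Γ → ℕ := fun Tp =>
          if B Tp.1 = B Tp.2 then 0
          else Nat.card (closure (D ∩ (B Tp.1 : Set Γ) ∩ (B Tp.2 : Set Γ)) : Subgroup Γ)
          with hfdef
        haveI : Nonempty (Sylow p Γ) := ⟨T₁'⟩
        obtain ⟨⟨T₁, T₂⟩, hmax⟩ := Finite.exists_max f
        have hxU' : x ∈ closure (D ∩ (B T₁' : Set Γ) ∩ (B T₂' : Set Γ)) :=
          subset_closure ⟨⟨hxD, hx1'⟩, hx2'⟩
        have hf' : 2 ≤ f (T₁', T₂') := by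
          rw [hfdef]
          simp only [if_neg hBne']
          rw [Nat.succ_le_iff, Finite.one_lt_card_iff_nontrivial]
          exact ⟨⟨x, hxU'⟩, 1, by simp [Subtype.ext_iff, hx1]⟩
        have hf2 : 2 ≤ f (T₁, T₂) := le_trans hf' (hmax _)
        have hBne : B T₁ ≠ B T₂ := by
          intro h
          rw [hfdef] at hf2
          simp only [if_pos h] at hf2
          omega
        set U : Subgroup Γ := closure (D ∩ (B T₁ : Set Γ) ∩ (B T₂ : Set Γ)) with hUdef
        have hfU : f (T₁, T₂) = Nat.card U := by
          rw [hfdef]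
          simp only [if_neg hBne, hUdef]
        have hUle1 : U ≤ B T₁ :=
          (closure_le _).2 (Set.Subset.trans Set.inter_subset_left Set.inter_subset_right)
        have hUle2 : U ≤ B T₂ := (closure_le _).2 Set.inter_subset_right
        have hUne1 : U ≠ B T₁ := by
          intro h
          exact hBne (hcomp T₁ T₂ (h ▸ hUle2))
        have hUne2 : U ≠ B T₂ := by
          intro h
          exact hBne (hcomp T₂ T₁ (h ▸ hUle1)).symm
        have hPgen : ∀ T : Sylow p Γ, closure (D ∩ (B T : Set Γ)) = B T := by
          intro T
          apply le_antisymm ((closure_le _).2 Set.inter_subset_right)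
          conv_lhs => rw [hBdef]
          apply Subgroup.closure_mono
          rintro z ⟨hzD, hzT⟩
          exact ⟨hzD, hBmem T z hzD hzT⟩
        have hUgen1 : closure (D ∩ (B T₁ : Set Γ) ∩ (U : Set Γ)) = U := by
          apply le_antisymm ((closure_le _).2 Set.inter_subset_right)
          conv_lhs => rw [hUdef]
          apply Subgroup.closure_mono
          rintro z ⟨⟨hzD, hz1⟩, hz2⟩
          exact ⟨⟨hzD, hz1⟩, subset_closure ⟨⟨hzD, hz1⟩, hz2⟩⟩
        have hUgen2 : closure (D ∩ (B T₂ : Set Γ) ∩ (U : Set Γ)) = U := by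
          apply le_antisymm ((closure_le _).2 Set.inter_subset_right)
          conv_lhs => rw [hUdef]
          apply Subgroup.closure_mono
          rintro z ⟨⟨hzD, hz1⟩, hz2⟩
          exact ⟨⟨hzD, hz2⟩, subset_closure ⟨⟨hzD, hz1⟩, hz2⟩⟩
        obtain ⟨e₁, he₁D, he₁P, he₁U, he₁n⟩ := BX.pgroup_lemma_ambient p (B T₁) U
          (hBp T₁) D hinv (hPgen T₁) hUle1 hUgen1 hUne1
        obtain ⟨e₂, he₂D, he₂P, he₂U, he₂n⟩ := BX.pgroup_lemma_ambient p (B T₂) U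
          (hBp T₂) D hinv (hPgen T₂) hUle2 hUgen2 hUne2
        set X : Subgroup Γ := closure ({e₁, e₂} : Set Γ) with hXdef
        have hXp : IsPGroup p X := hpair e₁ he₁D e₂ he₂D
        have hXnorm : X ≤ normalizer (U : Set Γ) := by
          apply (closure_le _).2
          rintro z hz
          rcases hz with rfl | hz
          · exact BX.mem_normalizer_of_conj U z he₁n
          · rw [Set.mem_singleton_iff] at hz
            subst hz
            exact BX.mem_normalizer_of_conj U z he₂n
        have hUp : IsPGroup p U := BX.isPGroup_of_le U (B T₁) hUle1 (hBp T₁)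
        have hsupP : IsPGroup p (U ⊔ X : Subgroup Γ) :=
          IsPGroup.to_sup_of_normal_left' hUp hXp hXnorm
        obtain ⟨T₅, hT₅⟩ := hsupP.exists_le_sylow
        have hXle : X ≤ (T₅ : Subgroup Γ) := le_trans le_sup_right hT₅
        have hUleT₅ : U ≤ (T₅ : Subgroup Γ) := le_trans le_sup_left hT₅
        have he₁B₅ : e₁ ∈ B T₅ :=
          hBmem T₅ e₁ he₁D (hXle (subset_closure (by simp)))
        have he₂B₅ : e₂ ∈ B T₅ :=
          hBmem T₅ e₂ he₂D (hXle (subset_closure (by simp)))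
        have hkey : ∀ (T : Sylow p Γ) (e : Γ), U ≤ B T → e ∈ D → e ∈ B T → e ∈ B T₅ → e ∉ U →
            B T₅ = B T := by
          intro T e hUleT heD heBT heB₅ heU
          by_contra hne5
          have hY : U ≤ closure (D ∩ (B T : Set Γ) ∩ (B T₅ : Set Γ)) := by
            conv_lhs => rw [hUdef]
            apply Subgroup.closure_mono
            rintro z ⟨⟨hzD, hz1⟩, hz2⟩
            have hzU : z ∈ U := subset_closure ⟨⟨hzD, hz1⟩, hz2⟩
            exact ⟨⟨hzD, hUleT hzU⟩, hBmem T₅ z hzD (hUleT₅ hzU)⟩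
          have he₁Y : e ∈ closure (D ∩ (B T : Set Γ) ∩ (B T₅ : Set Γ)) :=
            subset_closure ⟨⟨heD, heBT⟩, heB₅⟩
          have hlt : Nat.card U < Nat.card (closure (D ∩ (B T : Set Γ) ∩ (B T₅ : Set Γ))) :=
            BX.card_lt _ _ hY e he₁Y heU
          have hm := hmax (T, T₅)
          rw [hfU, hfdef] at hm
          simp only [if_neg (show ¬ B T = B T₅ from fun h => hne5 h.symm)] at hm
          omega
        have h1 : B T₅ = B T₁ := hkey T₁ e₁ hUle1 he₁D he₁P he₁B₅ he₁U
        have h2 : B T₅ = B T₂ := hkey T₂ e₂ hUle2 he₂D he₂P he₂B₅ he₂U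
        exact hBne (h1 ▸ h2)

section Folder

/-- `(G,H,K)` is a BX2P-folder: a loop folder (`K` a transversal to all
conjugates of `H` in `G`, `1 ∈ K`) associated to a Bruck loop of 2-power
exponent: `K` is a twisted subgroup, every element of `K` has 2-power order,
`H` acts on `K` by conjugation, and there is an involutory automorphism `τ`
of `G` centralizing `H` and inverting every element of `K`, such that
`Λ = τK` is invariant under `G`-conjugation in `G⟨τ⟩` (equivalently,
`(τ g)⁻¹ * k * g ∈ K` for all `g ∈ G`, `k ∈ K`). -/
def IsBX2PFolder {G : Type*} [Group G] (H : Subgroup G) (K : Set G)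
    (τ : G ≃* G) : Prop :=
  ((1 : G) ∈ K) ∧
  (∀ u g : G, ∃! k, k ∈ K ∧ ∃ h ∈ H, g = u⁻¹ * h * u * k) ∧
  (∀ x ∈ K, x⁻¹ ∈ K) ∧
  (∀ x ∈ K, ∀ y ∈ K, x * y * x ∈ K) ∧
  (∀ k ∈ K, ∃ n : ℕ, orderOf k = 2 ^ n) ∧
  (∀ h ∈ H, ∀ k ∈ K, h * k * h⁻¹ ∈ K) ∧
  (∀ g : G, τ (τ g) = g) ∧
  (∀ h ∈ H, τ h = h) ∧
  (∀ k ∈ K, τ k = k⁻¹) ∧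
  (∀ g : G, ∀ k ∈ K, (τ g)⁻¹ * k * g ∈ K)

set_option maxHeartbeats 1000000 in
open SemidirectProduct in
/-- The squares of elements of `K` generate (together with all their conjugates)
a normal 2-subgroup of `G`.  This is where Baer's theorem is applied, inside the
semidirect product `G ⋊ ⟨τ⟩`. -/
theorem BX.key {G : Type u} [Group G] [Finite G] (H : Subgroup G) (K : Set G) (τ : G ≃* G)
    (hfolder : IsBX2PFolder H K τ) :
    ∃ M : Subgroup G, M.Normal ∧ IsPGroup 2 M ∧ ∀ k ∈ K, k ^ 2 ∈ M := by
  classical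
  obtain ⟨h1K, htrans, hKinv, htw, hord, hHK, hττ, hτH, hτK, hΛ⟩ := hfolder
  haveI : Fact (Nat.Prime 2) := ⟨Nat.prime_two⟩
  set τ' : MulAut G := τ with hτ'def
  have hτ'2 : τ' * τ' = 1 := by
    ext g
    simpa [MulAut.mul_apply] using hττ g
  set Sg : Subgroup (MulAut G) := Subgroup.zpowers τ' with hSgdef
  set φ : ↥Sg →* MulAut G := Sg.subtype with hφdef
  let Γ := SemidirectProduct G Sg φ
  letI : Group Γ := inferInstanceAs (Group (G ⋊[φ] Sg))
  haveI hΓfin : Finite Γ := by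
    apply Finite.of_injective (fun x : Γ => (x.left, x.right))
    intro a b hab
    simp only [Prod.mk.injEq] at hab
    cases a; cases b
    simp_all
  set σ : ↥Sg := ⟨τ', Subgroup.mem_zpowers τ'⟩ with hσdef
  have hσ2 : σ * σ = 1 := Subtype.ext hτ'2
  set t : Γ := inr σ with htdef
  have htt : t * t = 1 := by
    rw [htdef, ← map_mul, hσ2, map_one]
  have hswap : ∀ g : G, t * inl g = inl (τ g) * t := by
    intro g
    have h := SemidirectProduct.inl_aut (φ := φ) σ g
    have h2 : (φ σ) g = τ g := rfl
    rw [h2] at h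
    rw [htdef, h]
    simp [mul_assoc, ← map_mul]
  have hA : ∀ g : G, t * ((inl g)⁻¹ * t * inl g) = inl ((τ g)⁻¹ * g) := by
    intro g
    have h1 : (inl g : Γ)⁻¹ = inl g⁻¹ := by rw [← map_inv]
    calc t * ((inl g)⁻¹ * t * inl g) = (t * inl g⁻¹) * t * inl g := by
          rw [h1]; group
      _ = (inl (τ g⁻¹) * t) * t * inl g := by rw [hswap]
      _ = inl (τ g⁻¹) * (t * t) * inl g := by group
      _ = inl (τ g⁻¹) * inl g := by rw [htt]; group
      _ = inl ((τ g)⁻¹ * g) := by rw [← map_mul, map_inv]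
  have hcommtr : ∀ h : ↥Sg, t * inr h = inr h * t := by
    intro h
    obtain ⟨m, hm⟩ := Subgroup.mem_zpowers_iff.1 h.2
    have hcomm : σ * h = h * σ := Subtype.ext (by
      show τ' * (h : MulAut G) = (h : MulAut G) * τ'
      rw [← hm]
      exact (Commute.refl τ').zpow_right m)
    rw [htdef, ← map_mul, ← map_mul, hcomm]
  -- the main product computation
  have hB : ∀ w : Γ, ∃ κ ∈ K, ∃ c : Γ, t * (w⁻¹ * t * w) = c * inl κ * c⁻¹ := by
    intro w
    have hw : w = inl w.left * inr w.right := (inl_left_mul_inr_right w).symm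
    set n : G := w.left
    set h : ↥Sg := w.right
    refine ⟨(τ n)⁻¹ * n, by simpa using hΛ n 1 h1K, inr h⁻¹, ?_⟩
    have hwinv : w⁻¹ = inr h⁻¹ * (inl n)⁻¹ := by
      rw [hw, mul_inv_rev, map_inv]
    calc t * (w⁻¹ * t * w)
        = (t * inr h⁻¹) * ((inl n)⁻¹ * t * (inl n * inr h)) := by rw [hwinv, hw]; group
      _ = (inr h⁻¹ * t) * ((inl n)⁻¹ * t * inl n) * inr h := by rw [hcommtr]; group
      _ = inr h⁻¹ * (t * ((inl n)⁻¹ * t * inl n)) * inr h := by group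
      _ = inr h⁻¹ * inl ((τ n)⁻¹ * n) * inr h := by rw [hA]
      _ = inr h⁻¹ * inl ((τ n)⁻¹ * n) * (inr h⁻¹)⁻¹ := by
          have h8 : ((inr h⁻¹ : Γ))⁻¹ = inr h := by rw [← map_inv, inv_inv]
          rw [h8]
  -- D is the conjugacy class of t
  set D : Set Γ := {y : Γ | IsConj t y} with hDdef
  have htD : t ∈ D := IsConj.refl t
  have hDinv : ∀ g : Γ, ∀ d ∈ D, g * d * g⁻¹ ∈ D := by
    intro g d hd
    exact hd.trans (isConj_iff.2 ⟨g, rfl⟩)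
  have hDsq : ∀ a ∈ D, a * a = 1 := by
    intro a ha
    obtain ⟨c, hc⟩ := isConj_iff.1 ha
    rw [← hc]
    calc c * t * c⁻¹ * (c * t * c⁻¹) = c * (t * t) * c⁻¹ := by group
      _ = 1 := by rw [htt]; group
  have horder : ∀ a ∈ D, ∀ b ∈ D, ∃ κ ∈ K, ∃ c : Γ, a * b = c * inl κ * c⁻¹ := by
    intro a ha b hb
    obtain ⟨c₁, hc₁⟩ := isConj_iff.1 ha
    obtain ⟨c₂, hc₂⟩ := isConj_iff.1 hb
    obtain ⟨κ, hκ, c, hc⟩ := hB (c₁⁻¹ * c₂)⁻¹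
    refine ⟨κ, hκ, c₁ * c, ?_⟩
    have h6 : a * b = c₁ * (t * (((c₁⁻¹ * c₂)⁻¹)⁻¹ * t * (c₁⁻¹ * c₂)⁻¹)) * c₁⁻¹ := by
      rw [← hc₁, ← hc₂]; group
    rw [h6, hc]; group
  have hpairD : ∀ a ∈ D, ∀ b ∈ D, IsPGroup 2 (closure {a, b} : Subgroup Γ) := by
    intro a ha b hb
    obtain ⟨κ, hκ, c, hab⟩ := horder a ha b hb
    obtain ⟨m, hm⟩ := hord κ hκ
    have hso : orderOf (a * b) = 2 ^ m := by
      rw [hab]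
      have h1 : c * inl κ * c⁻¹ = (MulAut.conj c).toMonoidHom ((inl : G →* Γ) κ) := by
        simp [MulAut.conj_apply]
      rw [h1, orderOf_injective (MulAut.conj c).toMonoidHom (MulAut.conj c).injective,
        orderOf_injective (inl : G →* Γ) inl_injective, hm]
    have ha2 : a * a = 1 := hDsq a ha
    have hb2 : b * b = 1 := hDsq b hb
    have hainv : a⁻¹ = a := inv_eq_of_mul_eq_one_right ha2
    have hsa : a * (a * b) * a⁻¹ = (a * b)⁻¹ := by
      rw [hainv, mul_inv_rev, inv_eq_of_mul_eq_one_right hb2, hainv]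
      calc a * (a * b) * a = a * a * (b * a) := by group
        _ = b * a := by rw [ha2]; group
    have hZnorm : Subgroup.zpowers a ≤ normalizer (Subgroup.zpowers (a * b) : Set Γ) := by
      rw [Subgroup.zpowers_le]
      apply BX.mem_normalizer_of_conj
      intro u hu
      obtain ⟨mu, hmu⟩ := Subgroup.mem_zpowers_iff.1 hu
      rw [← hmu, ← conj_zpow, hsa, ← zpow_neg_one, ← zpow_mul]
      exact zpow_mem (Subgroup.mem_zpowers _) _
    have hZp : IsPGroup 2 (Subgroup.zpowers (a * b)) :=
      IsPGroup.of_card (n := m) (by rw [Nat.card_zpowers, hso])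
    have hAp : IsPGroup 2 (Subgroup.zpowers a) := by
      have hdvd : orderOf a ∣ 2 := orderOf_dvd_of_pow_eq_one (by rw [pow_two]; exact ha2)
      rcases (Nat.dvd_prime Nat.prime_two).1 hdvd with h | h
      · exact IsPGroup.of_card (n := 0) (by rw [Nat.card_zpowers, h, pow_zero])
      · exact IsPGroup.of_card (n := 1) (by rw [Nat.card_zpowers, h, pow_one])
    have hsup : IsPGroup 2 ((Subgroup.zpowers (a * b)) ⊔ (Subgroup.zpowers a) : Subgroup Γ) :=
      IsPGroup.to_sup_of_normal_left' hZp hAp hZnorm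
    apply BX.isPGroup_of_le _ _ ?_ hsup
    apply (closure_le _).2
    rintro z hz
    rcases hz with rfl | hz
    · exact (le_sup_right : Subgroup.zpowers z ≤ Subgroup.zpowers (z * b) ⊔ Subgroup.zpowers z)
        (Subgroup.mem_zpowers z)
    · rw [Set.mem_singleton_iff] at hz
      subst hz
      have hmm : a * (a * z) ∈ Subgroup.zpowers (a * z) ⊔ Subgroup.zpowers a :=
        mul_mem
          ((le_sup_right : Subgroup.zpowers a ≤ Subgroup.zpowers (a * z) ⊔ Subgroup.zpowers a)
            (Subgroup.mem_zpowers a))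
          ((le_sup_left : Subgroup.zpowers (a * z) ≤ Subgroup.zpowers (a * z) ⊔ Subgroup.zpowers a)
            (Subgroup.mem_zpowers (a * z)))
      rwa [← mul_assoc, ha2, one_mul] at hmm
  have hclosD : IsPGroup 2 (closure D : Subgroup Γ) :=
    BX.baer (Nat.card Γ) Γ (le_refl _) 2 D hDinv hpairD
  have hDnormal : (closure D : Subgroup Γ).Normal := by
    constructor
    intro x hx g
    have hmap : (closure D).map (MulAut.conj g).toMonoidHom ≤ closure D := by
      rw [MonoidHom.map_closure]
      apply (closure_le _).2
      rintro y ⟨d, hd, rfl⟩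
      exact subset_closure (by simpa [MulAut.conj_apply] using hDinv g d hd)
    exact hmap ⟨x, hx, by simp [MulAut.conj_apply]⟩
  refine ⟨(closure D).comap (inl : G →* Γ), hDnormal.comap (inl : G →* Γ), ?_, ?_⟩
  · intro x
    obtain ⟨n, hn⟩ := hclosD ⟨inl (x : G), x.2⟩
    refine ⟨n, ?_⟩
    have h1 : ((inl (x : G) : Γ)) ^ 2 ^ n = 1 := by
      have := congrArg Subtype.val hn
      push_cast at this
      simpa using this
    rw [← map_pow] at h1
    have h2 : ((x : G)) ^ 2 ^ n = 1 := inl_injective (by rw [h1, map_one])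
    ext
    push_cast
    simpa using h2
  · intro k hk
    show inl (k ^ 2) ∈ closure D
    have h9 : (τ k)⁻¹ * k = k ^ 2 := by
      rw [hτK k hk, inv_inv, pow_two]
    rw [← h9, ← hA k]
    refine mul_mem (subset_closure htD) (subset_closure ?_)
    have := hDinv (inl k)⁻¹ t htD
    simpa using this

end Folder

/-- Let `(G,H,K)` be a BX2P-folder and let `N = O₂(G)` be the
largest normal 2-subgroup of `G`. Then `k² ∈ N` for every `k ∈ K`, and in
`Ḡ = G/N` the image `K̄` of `K` contains `1`, each non-identity element of `K̄`
is an involution, and `K̄ \ {1}` is a union of `Ḡ`-conjugacy classes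
(i.e. `K̄ \ {1}` is closed under conjugation). -/
theorem square_in_O2_and_image_involutions {G : Type*} [Group G] [Finite G]
    (H : Subgroup G) (K : Set G) (τ : G ≃* G)
    (hfolder : IsBX2PFolder H K τ)
    (N : Subgroup G) [N.Normal] (hN2 : IsPGroup 2 N)
    (hNmax : ∀ M : Subgroup G, M.Normal → IsPGroup 2 M → M ≤ N) :
    (∀ k ∈ K, k ^ 2 ∈ N) ∧
    (1 : G ⧸ N) ∈ (QuotientGroup.mk : G → G ⧸ N) '' K ∧
    (∀ x ∈ (QuotientGroup.mk : G → G ⧸ N) '' K, x ≠ 1 →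
      x ^ 2 = 1 ∧ ∀ g : G ⧸ N, g * x * g⁻¹ ∈ (QuotientGroup.mk : G → G ⧸ N) '' K) := by
  obtain ⟨M, hMn, hMp, hMk⟩ := BX.key H K τ hfolder
  have hk2 : ∀ k ∈ K, k ^ 2 ∈ N := fun k hk => hNmax M hMn hMp (hMk k hk)
  obtain ⟨h1K, htrans, hKinv, htw, hord, hHK, hττ, hτH, hτK, hΛ⟩ := hfolder
  have hτg : ∀ g : G, (τ g)⁻¹ * g ∈ N := by
    intro g
    obtain ⟨k, ⟨hkK, h, hh, hgh⟩, -⟩ := htrans 1 g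
    have hg : g = h * k := by simpa using hgh
    have hτg' : τ g = h * k⁻¹ := by rw [hg, map_mul, hτH h hh, hτK k hkK]
    have heq : (τ g)⁻¹ * g = k ^ 2 := by rw [hτg', hg, pow_two]; group
    rw [heq]
    exact hk2 k hkK
  refine ⟨hk2, ⟨1, h1K, by simp⟩, ?_⟩
  intro x hx hx1
  obtain ⟨k, hkK, rfl⟩ := hx
  constructor
  · have h2 : (QuotientGroup.mk (k ^ 2) : G ⧸ N) = 1 := (QuotientGroup.eq_one_iff _).2 (hk2 k hkK)
    rw [pow_two, ← QuotientGroup.mk_mul, ← pow_two]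
    exact h2
  · intro g'
    obtain ⟨g, rfl⟩ := QuotientGroup.mk_surjective g'
    refine ⟨(τ g⁻¹)⁻¹ * k * g⁻¹, hΛ g⁻¹ k hkK, ?_⟩
    have h3 : τ g * g⁻¹ ∈ N := by
      have h1 : (τ g)⁻¹ * g ∈ N := hτg g
      have h2 : g * ((τ g)⁻¹ * g)⁻¹ * g⁻¹ ∈ N :=
        (inferInstance : N.Normal).conj_mem _ (inv_mem h1) g
      have h4 : g * ((τ g)⁻¹ * g)⁻¹ * g⁻¹ = τ g * g⁻¹ := by group
      rwa [h4] at h2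
    have hfact : (τ g⁻¹)⁻¹ * k * g⁻¹ = (τ g * g⁻¹) * (g * k * g⁻¹) := by
      rw [map_inv, inv_inv]
      group
    rw [hfact, QuotientGroup.mk_mul, (QuotientGroup.eq_one_iff _).2 h3, one_mul]
    simp [QuotientGroup.mk_mul, QuotientGroup.mk_inv]
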